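/- Let S and A be finite nonempty types. Let π, π' : S → A → ℝ be policies, i.e., for every s ∈ S, π(s,·) and π'(s,·) are nonnegative and sum to 1 over A, and assume π(s,a) > 0 for all s,a. Let P : S → A → S → ℝ be a transition function, i.e., for every s,a, P(s,a,·) is nonnegative and sums to 1 over S. Define K(s,s') = Σ_{a∈A} π(s,a)·P(s,a,s') and K'(s,s') = Σ_{a∈A} π'(s,a)·P(s,a,s'), with c-fold compositions K^c, K'^c. Suppose ε ∈ [0,1] and the Kullback–Leibler divergence satisfies Σ_{a∈A} π'(s,a)·log(π'(s,a)/π(s,a)) ≤ 2ε² for every s ∈ S (with the convention 0·log(0/x) = 0). Then for every c ≥ 1 and all s, s' ∈ S, |K'^c(s,s') − K^c(s,s')| ≤ 2εc. -/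

import Mathlib

open Finset

/-- `kpow K c` is the `c`-fold composition `K^c` of the kernel `K` (for `c ≥ 1`):
`K^1 = K` and `K^{n+1}(s, s'') = ∑ s', K(s, s') * K^n(s', s'')`. -/
noncomputable def kpow {S : Type*} [Fintype S] (K : S → S → ℝ) : ℕ → S → S → ℝ
  | 0 => fun _ _ => 0
  | 1 => K
  | n + 2 => fun s s'' => ∑ s', K s s' * kpow K (n + 1) s' s''



private noncomputable def gfun (x : ℝ) : ℝ := (2*x+4)*(x*Real.log x - x + 1) - 3*(x-1)^2
private noncomputable def g1fun (x : ℝ) : ℝ := 4*(x+1)*Real.log x - 8*(x-1)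

private lemma hasDeriv_g1 {x : ℝ} (hx : 0 < x) :
    HasDerivAt g1fun (4*Real.log x + 4/x - 4) x := by
  have h1 : HasDerivAt (fun y : ℝ => (4*y+4)*Real.log y) (4*Real.log x + (4*x+4)*x⁻¹) x := by
    have := (((hasDerivAt_id x).const_mul (4:ℝ)).add_const 4).mul (Real.hasDerivAt_log hx.ne')
    simp at this; exact this
  have h2 : HasDerivAt (fun y : ℝ => 8*(y-1)) 8 x := by
    simpa using ((hasDerivAt_id x).sub_const 1).const_mul (8:ℝ)
  have h3 := h1.sub h2
  have hfe : g1fun = fun y : ℝ => (4*y+4)*Real.log y - 8*(y-1) := by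
    funext y; unfold g1fun; ring
  rw [hfe]
  refine h3.congr_deriv ?_
  field_simp
  ring

private lemma hasDeriv_g {x : ℝ} (hx : 0 < x) : HasDerivAt gfun (g1fun x) x := by
  have hxl : HasDerivAt (fun y : ℝ => y*Real.log y - y + 1) (Real.log x) x := by
    have := (((hasDerivAt_id x).mul (Real.hasDerivAt_log hx.ne')).sub (hasDerivAt_id x)).add_const 1
    simp only [id, one_mul] at this
    refine this.congr_deriv ?_
    field_simp
    ring
  have hl : HasDerivAt (fun y : ℝ => 2*y+4) 2 x := by
    simpa using ((hasDerivAt_id x).const_mul (2:ℝ)).add_const 4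
  have hsq : HasDerivAt (fun y : ℝ => 3*(y-1)^2) (3*(2*(x-1))) x := by
    have := (((hasDerivAt_id x).sub_const 1).pow 2).const_mul (3:ℝ)
    simpa using this
  have h3 := (hl.mul hxl).sub hsq
  have hfe : gfun = fun y : ℝ => (2*y+4)*(y*Real.log y - y + 1) - 3*(y-1)^2 := by
    funext y; unfold gfun; ring
  rw [hfe]
  refine h3.congr_deriv ?_
  unfold g1fun
  ring

private lemma g1_mono : MonotoneOn g1fun (Set.Ioi 0) := by
  apply monotoneOn_of_deriv_nonneg (convex_Ioi 0)
  · intro x hx; exact (hasDeriv_g1 hx).continuousAt.continuousWithinAt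
  · intro x hx
    rw [interior_Ioi] at hx
    exact (hasDeriv_g1 hx).differentiableAt.differentiableWithinAt
  · intro x hx
    rw [interior_Ioi] at hx
    have hx' : (0:ℝ) < x := hx
    rw [(hasDeriv_g1 hx').deriv]
    have h := Real.log_le_sub_one_of_pos (show (0:ℝ) < 1/x by positivity)
    rw [Real.log_div one_ne_zero hx'.ne', Real.log_one] at h
    have e : 4/x = 4*(1/x) := by ring
    linarith [h, e]

private lemma g1one : g1fun 1 = 0 := by norm_num [g1fun]
private lemma gone : gfun 1 = 0 := by norm_num [gfun]

private lemma g_nonneg {x : ℝ} (hx : 0 ≤ x) : 0 ≤ gfun x := by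
  rcases eq_or_lt_of_le hx with h | h
  · norm_num [gfun, ← h]
  rcases le_total x 1 with hx1 | hx1
  · have hanti : AntitoneOn gfun (Set.Ioc 0 1) := by
      apply antitoneOn_of_deriv_nonpos (convex_Ioc 0 1)
      · intro y hy; exact (hasDeriv_g hy.1).continuousAt.continuousWithinAt
      · intro y hy
        rw [interior_Ioc] at hy
        exact (hasDeriv_g hy.1).differentiableAt.differentiableWithinAt
      · intro y hy
        rw [interior_Ioc] at hy
        rw [(hasDeriv_g hy.1).deriv]
        have := g1_mono (Set.mem_Ioi.mpr hy.1) (Set.mem_Ioi.mpr one_pos) hy.2.le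
        rwa [g1one] at this
    have := hanti ⟨h, hx1⟩ ⟨one_pos, le_refl 1⟩ hx1
    rwa [gone] at this
  · have hmono : MonotoneOn gfun (Set.Ici 1) := by
      apply monotoneOn_of_deriv_nonneg (convex_Ici 1)
      · intro y hy; exact (hasDeriv_g (lt_of_lt_of_le one_pos hy)).continuousAt.continuousWithinAt
      · intro y hy
        rw [interior_Ici] at hy
        exact (hasDeriv_g (lt_trans one_pos hy)).differentiableAt.differentiableWithinAt
      · intro y hy
        rw [interior_Ici] at hy
        rw [(hasDeriv_g (lt_trans one_pos hy)).deriv]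
        have := g1_mono (Set.mem_Ioi.mpr one_pos) (Set.mem_Ioi.mpr (lt_trans one_pos hy)) hy.le
        rwa [g1one] at this
    have := hmono (Set.mem_Ici.mpr le_rfl) (Set.mem_Ici.mpr hx1) hx1
    rwa [gone] at this

private lemma key_pointwise {x : ℝ} (hx : 0 ≤ x) :
    3*(x-1)^2 ≤ (2*x+4)*(x*Real.log x - x + 1) := by
  have := g_nonneg hx
  unfold gfun at this
  linarith

private lemma pinsker {A : Type*} [Fintype A] (p q : A → ℝ)
    (hq : ∀ a, 0 < q a) (hp : ∀ a, 0 ≤ p a)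
    (hps : ∑ a, p a = 1) (hqs : ∑ a, q a = 1) :
    (∑ a, |p a - q a|)^2 ≤ 2 * ∑ a, p a * Real.log (p a / q a) := by
  have hterm : ∀ a, 3*(p a - q a)^2 ≤
      (2*p a + 4*q a) * (p a * Real.log (p a / q a) - p a + q a) := by
    intro a
    have hqa := hq a
    have hx : 0 ≤ p a / q a := div_nonneg (hp a) hqa.le
    have key := key_pointwise hx
    have h := mul_le_mul_of_nonneg_left key (sq_nonneg (q a))
    have e1 : (q a)^2 * (3*(p a / q a - 1)^2) = 3*(p a - q a)^2 := by
      field_simp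
    have e2 : (q a)^2 * ((2*(p a / q a)+4)*((p a / q a)*Real.log (p a / q a) - (p a / q a) + 1))
        = (2*p a + 4*q a) * (p a * Real.log (p a / q a) - p a + q a) := by
      field_simp
    rw [e1, e2] at h
    exact h
  set w : A → ℝ := fun a => 2*p a + 4*q a with hw
  have hwpos : ∀ a, 0 < w a := fun a => by
    have := hp a; have := hq a; simp only [hw]; positivity
  have hws : ∑ a, w a = 6 := by
    simp only [hw]
    rw [Finset.sum_add_distrib, ← Finset.mul_sum, ← Finset.mul_sum, hps, hqs]
    norm_num
  -- Cauchy-Schwarz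
  have hcs := Finset.sum_mul_sq_le_sq_mul_sq Finset.univ
      (fun a => |p a - q a| / Real.sqrt (w a)) (fun a => Real.sqrt (w a))
  have e3 : ∀ a : A, |p a - q a| / Real.sqrt (w a) * Real.sqrt (w a) = |p a - q a| := by
    intro a
    rw [div_mul_cancel₀]
    exact (Real.sqrt_pos.mpr (hwpos a)).ne'
  have e4 : ∀ a : A, (|p a - q a| / Real.sqrt (w a))^2 = (p a - q a)^2 / w a := by
    intro a
    rw [div_pow, Real.sq_sqrt (hwpos a).le, sq_abs]
  have e5 : ∀ a : A, (Real.sqrt (w a))^2 = w a := fun a => Real.sq_sqrt (hwpos a).le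
  simp only [e3, e4, e5] at hcs
  rw [hws] at hcs
  -- bound the quadratic sum by KL/3
  have hsum : ∑ a, (p a - q a)^2 / w a ≤ (∑ a, p a * Real.log (p a / q a)) / 3 := by
    have h6 : ∑ a, (p a - q a)^2 / w a
        ≤ ∑ a, (p a * Real.log (p a / q a) - p a + q a) / 3 := by
      apply Finset.sum_le_sum
      intro a _
      rw [div_le_div_iff₀ (hwpos a) (by norm_num : (0:ℝ) < 3)]
      have := hterm a
      linarith
    calc ∑ a, (p a - q a)^2 / w a ≤ _ := h6
      _ = (∑ a, p a * Real.log (p a / q a)) / 3 := by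
          rw [← Finset.sum_div]
          congr 1
          rw [Finset.sum_add_distrib, Finset.sum_sub_distrib, hps, hqs]
          ring
  nlinarith [hcs, hsum]

private lemma kpow_nonneg {S : Type*} [Fintype S] (M : S → S → ℝ)
    (h : ∀ s s', 0 ≤ M s s') : ∀ c s s', 0 ≤ kpow M c s s' := by
  intro c
  induction c with
  | zero => intro s s'; simp [kpow]
  | succ n ih =>
    cases n with
    | zero => exact h
    | succ m =>
      intro s s''
      show 0 ≤ ∑ s', M s s' * kpow M (m+1) s' s''
      exact Finset.sum_nonneg fun s' _ => mul_nonneg (h s s') (ih s' s'')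

private lemma kpow_row {S : Type*} [Fintype S] (M : S → S → ℝ)
    (h1 : ∀ s, ∑ s', M s s' = 1) : ∀ c, 1 ≤ c → ∀ s, ∑ s'', kpow M c s s'' = 1 := by
  intro c
  induction c with
  | zero => omega
  | succ n ih =>
    cases n with
    | zero => intro _ s; exact h1 s
    | succ m =>
      intro _ s
      show ∑ s'', ∑ s', M s s' * kpow M (m+1) s' s'' = 1
      rw [Finset.sum_comm]
      have : ∀ s' : S, ∑ s'', M s s' * kpow M (m+1) s' s'' = M s s' := by
        intro s'
        rw [← Finset.mul_sum, ih (by omega) s', mul_one]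
      rw [Finset.sum_congr rfl fun s' _ => this s']
      exact h1 s

private lemma l1_bound {S : Type*} [Fintype S] (K K' : S → S → ℝ) (ε : ℝ) (hε0 : 0 ≤ ε)
    (hK0 : ∀ s s', 0 ≤ K s s') (hK1 : ∀ s, ∑ s', K s s' = 1)
    (hK'0 : ∀ s s', 0 ≤ K' s s') (hK'1 : ∀ s, ∑ s', K' s s' = 1)
    (hdiff : ∀ s, ∑ s', |K' s s' - K s s'| ≤ 2 * ε) :
    ∀ c : ℕ, 1 ≤ c → ∀ s, ∑ s'', |kpow K' c s s'' - kpow K c s s''| ≤ 2 * ε * c := by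
  intro c
  induction c with
  | zero => omega
  | succ n ih =>
    cases n with
    | zero => intro _ s; simpa [kpow] using hdiff s
    | succ m =>
      intro _ s
      have hstep : ∑ s'', |kpow K' (m+2) s s'' - kpow K (m+2) s s''|
          ≤ ∑ s'', ∑ s', |K' s s' * kpow K' (m+1) s' s'' - K s s' * kpow K (m+1) s' s''| := by
        apply Finset.sum_le_sum
        intro s'' _
        show |(∑ s', K' s s' * kpow K' (m+1) s' s'') - ∑ s', K s s' * kpow K (m+1) s' s''| ≤ _
        rw [← Finset.sum_sub_distrib]
        exact Finset.abs_sum_le_sum_abs _ _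
      rw [Finset.sum_comm] at hstep
      have hinner : ∀ s' : S, ∑ s'', |K' s s' * kpow K' (m+1) s' s'' - K s s' * kpow K (m+1) s' s''|
          ≤ K' s s' * (2 * ε * (m+1)) + |K' s s' - K s s'| := by
        intro s'
        have hb : ∀ s'' : S, |K' s s' * kpow K' (m+1) s' s'' - K s s' * kpow K (m+1) s' s''|
            ≤ K' s s' * |kpow K' (m+1) s' s'' - kpow K (m+1) s' s''|
              + |K' s s' - K s s'| * kpow K (m+1) s' s'' := by
          intro s''
          have : K' s s' * kpow K' (m+1) s' s'' - K s s' * kpow K (m+1) s' s''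
              = K' s s' * (kpow K' (m+1) s' s'' - kpow K (m+1) s' s'')
                + (K' s s' - K s s') * kpow K (m+1) s' s'' := by ring
          rw [this]
          calc |_ + _| ≤ |K' s s' * (kpow K' (m+1) s' s'' - kpow K (m+1) s' s'')|
                + |(K' s s' - K s s') * kpow K (m+1) s' s''| := abs_add_le _ _
            _ = _ := by
              rw [abs_mul, abs_mul, abs_of_nonneg (hK'0 s s'),
                abs_of_nonneg (kpow_nonneg K hK0 (m+1) s' s'')]
        calc ∑ s'', |K' s s' * kpow K' (m+1) s' s'' - K s s' * kpow K (m+1) s' s''|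
            ≤ ∑ s'', (K' s s' * |kpow K' (m+1) s' s'' - kpow K (m+1) s' s''|
              + |K' s s' - K s s'| * kpow K (m+1) s' s'') :=
            Finset.sum_le_sum fun s'' _ => hb s''
          _ = K' s s' * (∑ s'', |kpow K' (m+1) s' s'' - kpow K (m+1) s' s''|)
              + |K' s s' - K s s'| * (∑ s'', kpow K (m+1) s' s'') := by
            rw [Finset.sum_add_distrib, Finset.mul_sum, Finset.mul_sum]
          _ ≤ K' s s' * (2 * ε * (m+1)) + |K' s s' - K s s'| := by
            rw [kpow_row K hK1 (m+1) (by omega) s', mul_one]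
            have := ih (by omega) s'
            push_cast at this ⊢
            have h2 := mul_le_mul_of_nonneg_left this (hK'0 s s')
            linarith
      calc ∑ s'', |kpow K' (m+2) s s'' - kpow K (m+2) s s''|
          ≤ ∑ s', (K' s s' * (2 * ε * (m+1)) + |K' s s' - K s s'|) :=
          hstep.trans (Finset.sum_le_sum fun s' _ => hinner s')
        _ = (∑ s', K' s s') * (2 * ε * (m+1)) + ∑ s', |K' s s' - K s s'| := by
          rw [Finset.sum_add_distrib, Finset.sum_mul]
        _ ≤ 1 * (2 * ε * (m+1)) + 2 * ε := by
          rw [hK'1 s]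
          have := hdiff s
          linarith
        _ ≤ 2 * ε * (m+1+1 : ℕ) := by push_cast; nlinarith

theorem abstracted_transition_bound_of_kl
    {S A : Type*} [Fintype S] [Nonempty S] [Fintype A] [Nonempty A]
    (π π' : S → A → ℝ)
    (hπ_pos : ∀ s a, 0 < π s a) (hπ_sum : ∀ s, ∑ a, π s a = 1)
    (hπ'_nonneg : ∀ s a, 0 ≤ π' s a) (hπ'_sum : ∀ s, ∑ a, π' s a = 1)
    (P : S → A → S → ℝ)
    (hP_nonneg : ∀ s a s', 0 ≤ P s a s') (hP_sum : ∀ s a, ∑ s', P s a s' = 1)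
    (K K' : S → S → ℝ)
    (hK : ∀ s s', K s s' = ∑ a, π s a * P s a s')
    (hK' : ∀ s s', K' s s' = ∑ a, π' s a * P s a s')
    (ε : ℝ) (hε0 : 0 ≤ ε) (hε1 : ε ≤ 1)
    (hKL : ∀ s, ∑ a, π' s a * Real.log (π' s a / π s a) ≤ 2 * ε ^ 2) :
    ∀ c : ℕ, 1 ≤ c → ∀ s s' : S,
      |kpow K' c s s' - kpow K c s s'| ≤ 2 * ε * c := by
  have hK0 : ∀ s s', 0 ≤ K s s' := fun s s' => by
    rw [hK]; exact Finset.sum_nonneg fun a _ => mul_nonneg (hπ_pos s a).le (hP_nonneg s a s')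
  have hK'0 : ∀ s s', 0 ≤ K' s s' := fun s s' => by
    rw [hK']; exact Finset.sum_nonneg fun a _ => mul_nonneg (hπ'_nonneg s a) (hP_nonneg s a s')
  have hK1 : ∀ s, ∑ s', K s s' = 1 := by
    intro s
    simp_rw [hK]
    rw [Finset.sum_comm]
    have : ∀ a : A, ∑ s', π s a * P s a s' = π s a := fun a => by
      rw [← Finset.mul_sum, hP_sum s a, mul_one]
    rw [Finset.sum_congr rfl fun a _ => this a, hπ_sum s]
  have hK'1 : ∀ s, ∑ s', K' s s' = 1 := by
    intro s
    simp_rw [hK']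
    rw [Finset.sum_comm]
    have : ∀ a : A, ∑ s', π' s a * P s a s' = π' s a := fun a => by
      rw [← Finset.mul_sum, hP_sum s a, mul_one]
    rw [Finset.sum_congr rfl fun a _ => this a, hπ'_sum s]
  have hpol : ∀ s, ∑ a, |π' s a - π s a| ≤ 2 * ε := by
    intro s
    have hp := pinsker (π' s) (π s) (hπ_pos s) (hπ'_nonneg s) (hπ'_sum s) (hπ_sum s)
    have hkl := hKL s
    have hnn : 0 ≤ ∑ a, |π' s a - π s a| :=
      Finset.sum_nonneg fun a _ => abs_nonneg _
    nlinarith [hp, hkl, hnn]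
  have hdiff : ∀ s, ∑ s', |K' s s' - K s s'| ≤ 2 * ε := by
    intro s
    have h1 : ∀ s' : S, |K' s s' - K s s'| ≤ ∑ a, |π' s a - π s a| * P s a s' := by
      intro s'
      rw [hK, hK', ← Finset.sum_sub_distrib]
      calc |∑ a, (π' s a * P s a s' - π s a * P s a s')|
          ≤ ∑ a, |π' s a * P s a s' - π s a * P s a s'| := Finset.abs_sum_le_sum_abs _ _
        _ = ∑ a, |π' s a - π s a| * P s a s' := by
          apply Finset.sum_congr rfl
          intro a _
          rw [← sub_mul, abs_mul, abs_of_nonneg (hP_nonneg s a s')]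
    calc ∑ s', |K' s s' - K s s'| ≤ ∑ s', ∑ a, |π' s a - π s a| * P s a s' :=
        Finset.sum_le_sum fun s' _ => h1 s'
      _ = ∑ a, |π' s a - π s a| := by
        rw [Finset.sum_comm]
        apply Finset.sum_congr rfl
        intro a _
        rw [← Finset.mul_sum, hP_sum s a, mul_one]
      _ ≤ 2 * ε := hpol s
  intro c hc s s'
  have hL1 := l1_bound K K' ε hε0 hK0 hK1 hK'0 hK'1 hdiff c hc s
  have hsingle := Finset.single_le_sum
    (f := fun s'' => |kpow K' c s s'' - kpow K c s s''|)
    (fun i _ => abs_nonneg _) (Finset.mem_univ s')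
  linarith
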